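/- arXiv:2509.08547 — 6 statements merged into one kernel-verified Lean document; each statement's English description precedes it below -/
import Mathlib

section
/- Let Q be a finite measure on ℝ^d and G : ℝ^d → ℝ be measurable with the property that for every x ∈ ℝ^d, ∫ (F(x) + G(y) + ⟨x, y⟩)₊ dQ(y) = ε for a fixed ε > 0 and some function F : ℝ^d → ℝ. Then F is concave. -/
open MeasureTheory

theorem concave_of_integral_pos_part_constraint (d : ℕ)
    (Q : Measure (EuclideanSpace ℝ (Fin d))) [IsFiniteMeasure Q]
    (F G : EuclideanSpace ℝ (Fin d) → ℝ) (ε : ℝ) (hε : 0 < ε)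
    (hInt : ∀ x, Integrable (fun y => max (F x + G y + inner ℝ x y) 0) Q)
    (hEq : ∀ x, ∫ y, max (F x + G y + (inner ℝ x y : ℝ)) 0 ∂Q = ε) :
    ConcaveOn ℝ Set.univ F := by
  constructor
  · exact convex_univ
  intro x _ x' _ a b ha hb hab
  simp only [smul_eq_mul]
  by_contra hcon
  push_neg at hcon
  set z := a • x + b • x' with hz
  set c := a * F x + b * F x' with hc
  have hδ : F z < c := hcon
  set p : EuclideanSpace ℝ (Fin d) → ℝ := fun y => max (F x + G y + inner ℝ x y) 0 with hp
  set q : EuclideanSpace ℝ (Fin d) → ℝ := fun y => max (F x' + G y + inner ℝ x' y) 0 with hq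
  set r : EuclideanSpace ℝ (Fin d) → ℝ := fun y => max (F z + G y + inner ℝ z y) 0 with hr
  -- pointwise bound for the midpoint with constant c
  have hptc : ∀ y, max (c + G y + (inner ℝ z y : ℝ)) 0 ≤ a * p y + b * q y := by
    intro y
    have hinner : (inner ℝ z y : ℝ) = a * inner ℝ x y + b * inner ℝ x' y := by
      simp [hz, inner_add_left, real_inner_smul_left, Finset.mul_sum, mul_assoc]
    have h1 : c + G y + (inner ℝ z y : ℝ)
        = a * (F x + G y + inner ℝ x y) + b * (F x' + G y + inner ℝ x' y) := by
      rw [hc, hinner]; linear_combination (-(G y)) * hab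
    have h2 : (F x + G y + (inner ℝ x y : ℝ)) ≤ p y := le_max_left _ _
    have h3 : (F x' + G y + (inner ℝ x' y : ℝ)) ≤ q y := le_max_left _ _
    have h4 : (0:ℝ) ≤ p y := le_max_right _ _
    have h5 : (0:ℝ) ≤ q y := le_max_right _ _
    apply max_le
    · rw [h1]; nlinarith
    · nlinarith
  have hpt : ∀ y, r y ≤ a * p y + b * q y := by
    intro y
    refine le_trans ?_ (hptc y)
    apply max_le _ (le_max_right _ _)
    exact le_trans (by linarith [hδ]) (le_max_left (c + G y + (inner ℝ z y : ℝ)) 0)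
  have hintr : Integrable r Q := hInt z
  have hintsum : Integrable (fun y => a * p y + b * q y) Q :=
    ((hInt x).const_mul a).add ((hInt x').const_mul b)
  have hintD : Integrable (fun y => a * p y + b * q y - r y) Q := hintsum.sub hintr
  have hDint : ∫ y, (a * p y + b * q y - r y) ∂Q = 0 := by
    rw [integral_sub hintsum hintr, integral_add ((hInt x).const_mul a) ((hInt x').const_mul b),
      integral_const_mul, integral_const_mul]
    have h1 : ∫ y, p y ∂Q = ε := hEq x
    have h2 : ∫ y, q y ∂Q = ε := hEq x'
    have h3 : ∫ y, r y ∂Q = ε := hEq z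
    rw [h1, h2, h3]
    nlinarith [hab]
  have hae0 := (integral_eq_zero_iff_of_nonneg
    (Pi.le_def.mpr (fun y => by simpa using sub_nonneg.mpr (hpt y))) hintD).mp hDint
  have hae : ∀ᵐ y ∂Q, a * p y + b * q y - r y = 0 := by
    filter_upwards [hae0] with y hy
    simpa using hy
  -- a.e., r y = 0
  have haer : ∀ᵐ y ∂Q, r y = 0 := by
    filter_upwards [hae] with y hy
    have heq : a * p y + b * q y = r y := by linarith
    have hle := hptc y
    rw [heq] at hle
    -- max (c + h) 0 ≤ max (F z + h) 0 with F z < c forces both to be 0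
    by_contra hne
    have hrpos : 0 < r y := lt_of_le_of_ne (le_max_right _ _) (Ne.symm hne)
    have h1 : F z + G y + (inner ℝ z y : ℝ) > 0 := by
      by_contra h
      push_neg at h
      have : r y = 0 := max_eq_right h
      linarith
    have h2 : r y = F z + G y + (inner ℝ z y : ℝ) := max_eq_left (le_of_lt h1)
    have h3 : c + G y + (inner ℝ z y : ℝ) ≤ max (c + G y + (inner ℝ z y : ℝ)) 0 := le_max_left _ _
    linarith
  have : ∫ y, r y ∂Q = 0 := by
    rw [integral_congr_ae haer]
    simp
  rw [hEq z] at this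
  linarith
end

section
/- Let P, Q be probability measures on ℝ^d and let E ⊆ ℝ^d × ℝ^d be measurable. Suppose f ∈ L²(P) and g ∈ L²(Q) satisfy: for all h ∈ L²(P), ∫∫_E (f(x) + g(y)) h(x) dQ(y) dP(x) = 0, and for all k ∈ L²(Q), ∫∫_E (f(x) + g(y)) k(y) dP(x) dQ(y) = 0. Then f(x) + g(y) = 0 for (P ⊗ Q)-almost every (x,y) ∈ E. -/
open MeasureTheory

theorem sum_zero_ae_on_E_of_orthogonality (d : ℕ)
    (P Q : Measure (EuclideanSpace ℝ (Fin d)))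
    [IsProbabilityMeasure P] [IsProbabilityMeasure Q]
    (E : Set (EuclideanSpace ℝ (Fin d) × EuclideanSpace ℝ (Fin d)))
    (hE : MeasurableSet E)
    (f g : EuclideanSpace ℝ (Fin d) → ℝ)
    (hf : MemLp f 2 P) (hg : MemLp g 2 Q)
    (hmf : Measurable f) (hmg : Measurable g)
    (h1 : ∀ h : EuclideanSpace ℝ (Fin d) → ℝ, MemLp h 2 P →
      ∫ x, ∫ y, E.indicator (fun _ => (f x + g y) * h x) (x, y) ∂Q ∂P = 0)
    (h2 : ∀ k : EuclideanSpace ℝ (Fin d) → ℝ, MemLp k 2 Q →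
      ∫ y, ∫ x, E.indicator (fun _ => (f x + g y) * k y) (x, y) ∂P ∂Q = 0) :
    ∀ᵐ p ∂(P.prod Q), p ∈ E → f p.1 + g p.2 = 0 := by
  set S : EuclideanSpace ℝ (Fin d) × EuclideanSpace ℝ (Fin d) → ℝ :=
    fun p => f p.1 + g p.2 with hSdef
  have hpf : MeasurePreserving Prod.fst (P.prod Q) P :=
    ⟨measurable_fst, by simp [Measure.map_fst_prod]⟩
  have hps : MeasurePreserving Prod.snd (P.prod Q) Q :=
    ⟨measurable_snd, by simp [Measure.map_snd_prod]⟩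
  have hFf : MemLp (fun p : EuclideanSpace ℝ (Fin d) × EuclideanSpace ℝ (Fin d) => f p.1)
      2 (P.prod Q) := hf.comp_measurePreserving hpf
  have hGg : MemLp (fun p : EuclideanSpace ℝ (Fin d) × EuclideanSpace ℝ (Fin d) => g p.2)
      2 (P.prod Q) := hg.comp_measurePreserving hps
  have hSm : MemLp S 2 (P.prod Q) := hFf.add hGg
  have hmul : ∀ (T : EuclideanSpace ℝ (Fin d) × EuclideanSpace ℝ (Fin d) → ℝ),
      MemLp T 2 (P.prod Q) → Integrable (fun p => S p * T p) (P.prod Q) := by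
    intro T hT
    have := hT.smul (φ := S) hSm (r := 1)
    exact memLp_one_iff_integrable.mp this
  have hint1 : Integrable (fun p => S p * f p.1) (P.prod Q) := hmul _ hFf
  have hint2 : Integrable (fun p => S p * g p.2) (P.prod Q) := hmul _ hGg
  have hintSq : Integrable (fun p => S p * S p) (P.prod Q) := hmul _ hSm
  have hI1 : Integrable (fun p => E.indicator (fun p => S p * f p.1) p) (P.prod Q) :=
    hint1.indicator hE
  have hI2 : Integrable (fun p => E.indicator (fun p => S p * g p.2) p) (P.prod Q) :=
    hint2.indicator hE
  have hISq : Integrable (fun p => E.indicator (fun p => S p * S p) p) (P.prod Q) :=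
    hintSq.indicator hE
  -- first orthogonality relation, as an integral over the product measure
  have e1 : ∫ p, E.indicator (fun p => S p * f p.1) p ∂(P.prod Q) = 0 := by
    have hu1 : Integrable (Function.uncurry fun x y =>
        E.indicator (fun p => S p * f p.1) (x, y)) (P.prod Q) := by
      exact hI1
    have heq := MeasureTheory.integral_integral hu1
    simp only [Prod.mk.eta] at heq
    rw [← heq]
    rw [← h1 f hf]
    refine integral_congr_ae (Filter.Eventually.of_forall fun x => ?_)
    refine integral_congr_ae (Filter.Eventually.of_forall fun y => ?_)
    by_cases hp : (x, y) ∈ E <;> simp [Set.indicator_of_mem, Set.indicator_of_notMem, hp, hSdef]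
  have e2 : ∫ p, E.indicator (fun p => S p * g p.2) p ∂(P.prod Q) = 0 := by
    have hu2 : Integrable (Function.uncurry fun x y =>
        E.indicator (fun p => S p * g p.2) (x, y)) (P.prod Q) := by
      exact hI2
    have heq := MeasureTheory.integral_integral hu2
    simp only [Prod.mk.eta] at heq
    have hswap := MeasureTheory.integral_integral_swap hu2
    rw [← heq, hswap, ← h2 g hg]
    refine integral_congr_ae (Filter.Eventually.of_forall fun y => ?_)
    refine integral_congr_ae (Filter.Eventually.of_forall fun x => ?_)
    by_cases hp : (x, y) ∈ E <;> simp [Set.indicator_of_mem, Set.indicator_of_notMem, hp, hSdef]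
  have key : ∫ p, E.indicator (fun p => S p * S p) p ∂(P.prod Q) = 0 := by
    have hsplit : (fun p => E.indicator (fun p => S p * S p) p)
        = fun p => E.indicator (fun p => S p * f p.1) p
          + E.indicator (fun p => S p * g p.2) p := by
      funext p
      by_cases hp : p ∈ E
      · simp [Set.indicator_of_mem hp, hSdef, mul_add]
      · simp [Set.indicator_of_notMem hp]
    rw [hsplit, integral_add hI1 hI2, e1, e2, add_zero]
  have hnn : 0 ≤ fun p => E.indicator (fun p => S p * S p) p := by
    intro p
    by_cases hp : p ∈ E
    · simpa [Set.indicator_of_mem hp] using mul_self_nonneg (S p)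
    · simp [Set.indicator_of_notMem hp]
  have hzero : (fun p => E.indicator (fun p => S p * S p) p)
      =ᵐ[P.prod Q] 0 :=
    (integral_eq_zero_iff_of_nonneg hnn hISq).mp key
  filter_upwards [hzero] with p hp hpE
  have : S p * S p = 0 := by
    simpa [Set.indicator_of_mem hpE] using hp
  exact mul_self_eq_zero.mp this
end

section
/- Let P, Q be Borel probability measures on ℝ^d with compact supports. For each x, let S_x ⊆ ℝ^d be a measurable set (jointly measurable in (x,y)) with Q(S_x) ≥ λ > 0 for all x. Then the operator A₁ : L²(Q) → L²(P) defined by (A₁ g)(x) = (∫_{S_x} g dQ) / Q(S_x) is a compact operator. -/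
open MeasureTheory Filter Topology ENNReal

local notation "⟪" x ", " y "⟫" => @inner ℝ _ _ x y


lemma weak_bw {H : Type*} [NormedAddCommGroup H] [InnerProductSpace ℝ H] [CompleteSpace H]
    [TopologicalSpace.SeparableSpace H] (g : ℕ → H) (hg : ∀ n, ‖g n‖ ≤ 1) :
    ∃ (a : H) (φ : ℕ → ℕ), StrictMono φ ∧ ‖a‖ ≤ 1 ∧
      ∀ h : H, Tendsto (fun n => ⟪h, g (φ n)⟫) atTop (𝓝 ⟪h, a⟫) := by
  have : Nonempty H := ⟨0⟩
  set e : ℕ → H := TopologicalSpace.denseSeq H with he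
  have hdense : DenseRange e := TopologicalSpace.denseRange_denseSeq H
  set F : ℕ → (ℕ → ℝ) := fun n k => ⟪e k, g n⟫ with hF
  set K : Set (ℕ → ℝ) := Set.univ.pi fun k => Set.Icc (-‖e k‖) ‖e k‖ with hK
  have hKc : IsCompact K := isCompact_univ_pi fun k => isCompact_Icc
  have hFK : ∀ n, F n ∈ K := by
    intro n
    rw [Set.mem_univ_pi]
    intro k
    have h1 : |⟪e k, g n⟫| ≤ ‖e k‖ * ‖g n‖ := abs_real_inner_le_norm _ _
    have h2 : ‖e k‖ * ‖g n‖ ≤ ‖e k‖ * 1 :=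
      mul_le_mul_of_nonneg_left (hg n) (norm_nonneg _)
    have := abs_le.mp (h1.trans (by simpa using h2))
    exact ⟨this.1, this.2⟩
  obtain ⟨f, -, φ, hφ, hconv⟩ := hKc.isSeqCompact hFK
  have hcomp : ∀ k, Tendsto (fun n => ⟪e k, g (φ n)⟫) atTop (𝓝 (f k)) := by
    intro k
    exact (tendsto_pi_nhds.mp hconv k)
  -- Cauchy for arbitrary h
  have key : ∀ h : H, CauchySeq (fun n => ⟪h, g (φ n)⟫) := by
    intro h
    rw [Metric.cauchySeq_iff]
    intro ε hε
    obtain ⟨k, hk⟩ := Metric.denseRange_iff.mp hdense h (ε / 4) (by linarith)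
    have hck : CauchySeq (fun n => ⟪e k, g (φ n)⟫) := (hcomp k).cauchySeq
    obtain ⟨N, hN⟩ := Metric.cauchySeq_iff.mp hck (ε / 4) (by linarith)
    refine ⟨N, fun m hm n hn => ?_⟩
    have split : ∀ p q : ℕ,
        ⟪h, g p⟫ - ⟪h, g q⟫ = ⟪h - e k, g p - g q⟫ + (⟪e k, g p⟫ - ⟪e k, g q⟫) := by
      intro p q
      rw [inner_sub_left, inner_sub_right, inner_sub_right]
      ring
    have hb : |⟪h - e k, g (φ m) - g (φ n)⟫| ≤ ‖h - e k‖ * 2 := by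
      refine (abs_real_inner_le_norm _ _).trans ?_
      refine mul_le_mul_of_nonneg_left ?_ (norm_nonneg _)
      calc ‖g (φ m) - g (φ n)‖ ≤ ‖g (φ m)‖ + ‖g (φ n)‖ := norm_sub_le _ _
        _ ≤ 2 := by linarith [hg (φ m), hg (φ n)]
    have hdk : ‖h - e k‖ < ε / 4 := by
      have := hk
      rwa [dist_comm, dist_eq_norm, norm_sub_rev] at this
    have h2 := hN m hm n hn
    rw [Real.dist_eq] at h2 ⊢
    calc |⟪h, g (φ m)⟫ - ⟪h, g (φ n)⟫|
        = |⟪h - e k, g (φ m) - g (φ n)⟫ + (⟪e k, g (φ m)⟫ - ⟪e k, g (φ n)⟫)| := by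
          rw [split]
      _ ≤ |⟪h - e k, g (φ m) - g (φ n)⟫| + |⟪e k, g (φ m)⟫ - ⟪e k, g (φ n)⟫| := abs_add_le _ _
      _ < ‖h - e k‖ * 2 + ε / 4 := by linarith [hb, h2]
      _ < ε := by nlinarith [hdk]
  have hex : ∀ h : H, ∃ l : ℝ, Tendsto (fun n => ⟪h, g (φ n)⟫) atTop (𝓝 l) :=
    fun h => cauchySeq_tendsto_of_complete (key h)
  choose Lf hLf using hex
  have hLadd : ∀ x y : H, Lf (x + y) = Lf x + Lf y := by
    intro x y
    refine tendsto_nhds_unique ?_ ((hLf x).add (hLf y))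
    have : (fun n => ⟪x + y, g (φ n)⟫) = fun n => ⟪x, g (φ n)⟫ + ⟪y, g (φ n)⟫ := by
      funext n; rw [inner_add_left]
    rw [← this]
    exact hLf (x + y)
  have hLsmul : ∀ (c : ℝ) (x : H), Lf (c • x) = c * Lf x := by
    intro c x
    refine tendsto_nhds_unique ?_ ((hLf x).const_mul c)
    have : (fun n => ⟪c • x, g (φ n)⟫) = fun n => c * ⟪x, g (φ n)⟫ := by
      funext n; rw [real_inner_smul_left]
    rw [← this]
    exact hLf (c • x)
  have hLbound : ∀ x : H, |Lf x| ≤ ‖x‖ := by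
    intro x
    refine le_of_tendsto' (hLf x).abs fun n => ?_
    refine (abs_real_inner_le_norm _ _).trans ?_
    simpa using mul_le_mul_of_nonneg_left (hg (φ n)) (norm_nonneg x)
  let L : H →ₗ[ℝ] ℝ :=
    { toFun := Lf, map_add' := hLadd, map_smul' := fun c x => by simpa using hLsmul c x }
  let L' : H →L[ℝ] ℝ := LinearMap.mkContinuous L 1 fun x => by
    simpa [L] using hLbound x
  have hL'norm : ‖L'‖ ≤ 1 := LinearMap.mkContinuous_norm_le L zero_le_one _
  set a : H := (InnerProductSpace.toDual ℝ H).symm L' with ha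
  refine ⟨a, φ, hφ, ?_, ?_⟩
  · have : ‖a‖ = ‖L'‖ := LinearIsometryEquiv.norm_map _ _
    rw [this]; exact hL'norm
  · intro h
    have h1 : ⟪a, h⟫ = L' h := InnerProductSpace.toDual_symm_apply
    have h2 : ⟪h, a⟫ = L' h := by rw [real_inner_comm]; exact h1
    rw [h2]
    exact hLf h


-- key convergence lemma: weak convergence of inputs gives norm convergence of outputs
lemma key_tendsto (d : ℕ)
    (P Q : Measure (EuclideanSpace ℝ (Fin d)))
    [IsProbabilityMeasure P] [IsProbabilityMeasure Q]
    (S : EuclideanSpace ℝ (Fin d) → Set (EuclideanSpace ℝ (Fin d)))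
    (hS : ∀ x, MeasurableSet (S x))
    (lam : ℝ) (hlam : 0 < lam) (hSlow : ∀ x, ENNReal.ofReal lam ≤ Q (S x))
    (T : Lp ℝ 2 Q →L[ℝ] Lp ℝ 2 P)
    (hT : ∀ g : Lp ℝ 2 Q, ∀ᵐ x ∂P,
      (T g : EuclideanSpace ℝ (Fin d) → ℝ) x = (∫ y in S x, g y ∂Q) / (Q (S x)).toReal)
    (u : ℕ → Lp ℝ 2 Q) (hu2 : ∀ n, ‖u n‖ ≤ 2)
    (hweak : ∀ h : Lp ℝ 2 Q, Tendsto (fun n => ⟪h, u n⟫) atTop (𝓝 0)) :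
    Tendsto (fun n => ‖T (u n)‖) atTop (𝓝 0) := by
  set c : EuclideanSpace ℝ (Fin d) → ℝ := fun x => (Q (S x)).toReal with hc
  have hcl : ∀ x, lam ≤ c x := by
    intro x
    have h1 : ENNReal.ofReal lam ≤ Q (S x) := hSlow x
    have h2 : Q (S x) ≠ ∞ := measure_ne_top Q _
    have := ENNReal.toReal_mono h2 h1
    rwa [ENNReal.toReal_ofReal hlam.le] at this
  set W : EuclideanSpace ℝ (Fin d) → Lp ℝ 2 Q :=
    fun x => indicatorConstLp 2 (hS x) (measure_ne_top Q _) (1 : ℝ) with hW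
  have hWint : ∀ x (f : Lp ℝ 2 Q), ⟪W x, f⟫ = ∫ y in S x, f y ∂Q := fun x f =>
    L2.inner_indicatorConstLp_one (hS x) (measure_ne_top Q _) f
  have hWnormsq : ∀ x, ‖W x‖ ^ 2 = c x := by
    intro x
    rw [hW]
    rw [norm_indicatorConstLp (by norm_num) (by norm_num)]
    have : ((2 : ℝ≥0∞)).toReal = 2 := by norm_num
    rw [this]
    rw [norm_one, one_mul, ← Real.rpow_natCast ((Q.real (S x)) ^ (1/2 : ℝ)) 2,
      ← Real.rpow_mul measureReal_nonneg]
    rw [show (1/2 : ℝ) * ((2:ℕ):ℝ) = 1 by norm_num, Real.rpow_one]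
    rfl
  -- the squared-value functions
  set F : ℕ → EuclideanSpace ℝ (Fin d) → ℝ :=
    fun n x => ((T (u n) : EuclideanSpace ℝ (Fin d) → ℝ) x) ^ 2 with hFdef
  -- a.e. formula
  have hform : ∀ n, ∀ᵐ x ∂P,
      (T (u n) : EuclideanSpace ℝ (Fin d) → ℝ) x = ⟪W x, u n⟫ / c x := by
    intro n
    filter_upwards [hT (u n)] with x hx
    rw [hx, hWint]
  -- boundedness
  have habs : ∀ n x, |⟪W x, u n⟫ / c x| ≤ 2 / Real.sqrt lam := by
    intro n x
    have hcx : 0 < c x := lt_of_lt_of_le hlam (hcl x)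
    have h1 : |⟪W x, u n⟫| ≤ ‖W x‖ * ‖u n‖ := abs_real_inner_le_norm _ _
    have hWn : ‖W x‖ = Real.sqrt (c x) := by
      have := hWnormsq x
      have h0 : (0:ℝ) ≤ ‖W x‖ := norm_nonneg _
      nlinarith [Real.sq_sqrt hcx.le, Real.sqrt_nonneg (c x)]
    rw [abs_div, abs_of_pos hcx]
    rw [div_le_div_iff₀ hcx (Real.sqrt_pos.mpr hlam)]
    calc |⟪W x, u n⟫| * Real.sqrt lam
        ≤ (Real.sqrt (c x) * 2) * Real.sqrt lam := by
          refine mul_le_mul_of_nonneg_right ?_ (Real.sqrt_nonneg _)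
          rw [← hWn]
          exact h1.trans (mul_le_mul_of_nonneg_left (hu2 n) (norm_nonneg _))
      _ ≤ (Real.sqrt (c x) * 2) * Real.sqrt (c x) := by
          refine mul_le_mul_of_nonneg_left (Real.sqrt_le_sqrt (hcl x)) ?_
          positivity
      _ = 2 * c x := by rw [mul_comm (Real.sqrt (c x)) 2, mul_assoc,
            Real.mul_self_sqrt hcx.le]
  have hbound : ∀ n, ∀ᵐ x ∂P, ‖F n x‖ ≤ (2 / Real.sqrt lam) ^ 2 := by
    intro n
    filter_upwards [hform n] with x hx
    rw [hFdef]
    simp only [Real.norm_eq_abs, hx]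
    rw [abs_pow]  -- |y^2| = |y|^2? abs_pow : |a ^ n| = |a| ^ n
    have := habs n x
    have h0 : (0:ℝ) ≤ |⟪W x, u n⟫ / c x| := abs_nonneg _
    nlinarith [this]
  -- measurability
  have hmeas : ∀ n, AEStronglyMeasurable (F n) P := by
    intro n
    exact ((Lp.aestronglyMeasurable (T (u n))).mul
      (Lp.aestronglyMeasurable (T (u n)))).congr (by
        filter_upwards [] with x
        simp [hFdef, Pi.mul_apply, sq])
  -- pointwise limit
  have hlim : ∀ᵐ x ∂P, Tendsto (fun n => F n x) atTop (𝓝 0) := by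
    have hall : ∀ᵐ x ∂P, ∀ n, (T (u n) : EuclideanSpace ℝ (Fin d) → ℝ) x
        = ⟪W x, u n⟫ / c x := ae_all_iff.mpr hform
    filter_upwards [hall] with x hx
    have h1 : Tendsto (fun n => ⟪W x, u n⟫ / c x) atTop (𝓝 0) := by
      have := (hweak (W x)).div_const (c x)
      simpa using this
    have h2 : Tendsto (fun n => (⟪W x, u n⟫ / c x) ^ 2) atTop (𝓝 0) := by
      have := h1.pow 2
      simpa using this
    refine h2.congr fun n => ?_
    simp only [hFdef]
    rw [hx n]
  -- dominated convergence
  have hint : Tendsto (fun n => ∫ x, F n x ∂P) atTop (𝓝 (∫ _x, (0:ℝ) ∂P)) := by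
    refine tendsto_integral_of_dominated_convergence
      (fun _ => (2 / Real.sqrt lam) ^ 2) hmeas (integrable_const _) hbound hlim
  rw [integral_zero] at hint
  -- relate to norms
  have hnorm : ∀ n, ‖T (u n)‖ = Real.sqrt (∫ x, F n x ∂P) := by
    intro n
    have h1 : ⟪T (u n), T (u n)⟫ = ∫ x, F n x ∂P := by
      rw [L2.inner_def]
      refine integral_congr_ae ?_
      filter_upwards [] with x
      rw [hFdef]
      simp [RCLike.inner_apply]
    have h2 : ⟪T (u n), T (u n)⟫ = ‖T (u n)‖ ^ 2 := real_inner_self_eq_norm_sq _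
    rw [← h1, h2, Real.sqrt_sq (norm_nonneg _)]
  have := hint.sqrt
  rw [Real.sqrt_zero] at this
  exact this.congr fun n => (hnorm n).symm

theorem averaging_operator_compact (d : ℕ)
    (P Q : Measure (EuclideanSpace ℝ (Fin d)))
    [IsProbabilityMeasure P] [IsProbabilityMeasure Q]
    (KP KQ : Set (EuclideanSpace ℝ (Fin d))) (hKP : IsCompact KP) (hKQ : IsCompact KQ)
    (hPsupp : P KPᶜ = 0) (hQsupp : Q KQᶜ = 0)
    (S : EuclideanSpace ℝ (Fin d) → Set (EuclideanSpace ℝ (Fin d)))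
    (hSmeas : MeasurableSet {p : EuclideanSpace ℝ (Fin d) × EuclideanSpace ℝ (Fin d) |
      p.2 ∈ S p.1})
    (lam : ℝ) (hlam : 0 < lam) (hSlow : ∀ x, ENNReal.ofReal lam ≤ Q (S x))
    (T : Lp ℝ 2 Q →L[ℝ] Lp ℝ 2 P)
    (hT : ∀ g : Lp ℝ 2 Q, ∀ᵐ x ∂P,
      (T g : EuclideanSpace ℝ (Fin d) → ℝ) x = (∫ y in S x, g y ∂Q) / (Q (S x)).toReal) :
    IsCompactOperator T := by
  have factne : Fact ((2:ℝ≥0∞) ≠ ∞) := ⟨by norm_num⟩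
  have hsep : TopologicalSpace.SeparableSpace (Lp ℝ 2 Q) := by
    have : SecondCountableTopology (Lp ℝ 2 Q) := by infer_instance
    infer_instance
  have hS : ∀ x, MeasurableSet (S x) := fun x => measurable_prodMk_left hSmeas
  set s : Set (Lp ℝ 2 P) := ⇑T '' Metric.closedBall 0 1 with hs
  have hseq : IsSeqCompact (closure s) := by
    intro u hu
    have hex : ∀ n : ℕ, ∃ w ∈ s, dist (u n) w < 1/(n+1) := fun n =>
      Metric.mem_closure_iff.mp (hu n) _ (by positivity)
    choose v hvs hvd using hex
    choose g hgb hgT using fun n => (hvs n)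
    have hgnorm : ∀ n, ‖g n‖ ≤ 1 := fun n => by
      simpa [Metric.mem_closedBall, dist_zero_right] using hgb n
    obtain ⟨a, φ, hφ, ha1, hweak⟩ := weak_bw g hgnorm
    have hTconv : Tendsto (fun n => T (g (φ n))) atTop (𝓝 (T a)) := by
      rw [tendsto_iff_norm_sub_tendsto_zero]
      have hkey := key_tendsto d P Q S hS lam hlam hSlow T hT (fun n => g (φ n) - a)
        (fun n => by
          calc ‖g (φ n) - a‖ ≤ ‖g (φ n)‖ + ‖a‖ := norm_sub_le _ _
            _ ≤ 2 := by linarith [hgnorm (φ n)])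
        (fun h => by
          have h1 := (hweak h).sub (tendsto_const_nhds (x := ⟪h, a⟫))
          rw [sub_self] at h1
          refine h1.congr fun n => ?_
          rw [inner_sub_right])
      exact hkey.congr fun n => by rw [map_sub]
    have hTa : T a ∈ closure s :=
      subset_closure ⟨a, by simpa [Metric.mem_closedBall, dist_zero_right] using ha1, rfl⟩
    refine ⟨T a, hTa, φ, hφ, ?_⟩
    have h1 : Tendsto (fun n => dist (u (φ n)) (v (φ n))) atTop (𝓝 0) := by
      refine squeeze_zero (fun n => dist_nonneg) (fun n => ?_)
        tendsto_one_div_add_atTop_nhds_zero_nat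
      refine (hvd (φ n)).le.trans ?_
      have hn : n ≤ φ n := hφ.le_apply
      have : (n:ℝ) + 1 ≤ (φ n : ℝ) + 1 := by
        have := (Nat.cast_le (α := ℝ)).mpr hn
        linarith
      exact one_div_le_one_div_of_le (by positivity) this
    have h2 : Tendsto (fun n => dist (v (φ n)) (T a)) atTop (𝓝 0) := by
      have := tendsto_iff_dist_tendsto_zero.mp hTconv
      refine this.congr fun n => ?_
      rw [hgT (φ n)]
    rw [tendsto_iff_dist_tendsto_zero]
    refine squeeze_zero (fun n => dist_nonneg) (fun n => dist_triangle _ (v (φ n)) _) ?_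
    simpa using h1.add h2
  have hcompact : IsCompact (closure s) := hseq.isCompact
  exact ⟨closure s, hcompact,
    Filter.mem_of_superset (Metric.closedBall_mem_nhds 0 one_pos)
      (fun g hg => subset_closure (Set.mem_image_of_mem _ hg))⟩
end

section
/- Let P, Q be probability measures on ℝ^d, E ⊆ ℝ^d × ℝ^d measurable with sections S_x = {y : (x,y) ∈ E} and T_y = {x : (x,y) ∈ E}, and let η, ε > 0. Suppose f ∈ L²(P), g ∈ L²(Q) and α ∈ ℝ with |α| > 1, and η ≤ ε, satisfy the system f(x)((1-α) - (η/ε) Q(S_x)) = (η/ε) ∫_{S_x} g dQ for P-a.e. x and g(y)((1-α) - (η/ε) P(T_y)) = (η/ε) ∫_{T_y} f dP for Q-a.e. y. If moreover f and g are essentially bounded, then f = 0 P-a.e. and g = 0 Q-a.e. -/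
open MeasureTheory
open scoped ENNReal

/-- Pointwise step: if `v * ((1-α) - t) = r * I` with `|I| ≤ N * q`, `t = r*q`,
`0 ≤ q ≤ 1`, `0 < r ≤ 1`, `1 < |α|`, `0 ≤ N`, then `|v| ≤ N / |α|`. -/
lemma eigen_pointwise_bound (v r α N q I : ℝ) (hr0 : 0 < r) (hr1 : r ≤ 1)
    (hα : 1 < |α|) (hN : 0 ≤ N) (hq0 : 0 ≤ q) (hq1 : q ≤ 1)
    (hI : |I| ≤ N * q)
    (heq : v * ((1 - α) - r * q) = r * I) :
    |v| ≤ N / |α| := by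
  set t := r * q with ht
  have ht0 : 0 ≤ t := by positivity
  have ht1 : t ≤ 1 := by nlinarith
  have hden : t + (|α| - 1) ≤ |(1 - α) - t| := by
    rcases abs_cases α with ⟨h, h'⟩ <;> rcases abs_cases ((1 - α) - t) with ⟨h2, h2'⟩ <;>
      linarith
  have hkey : |v| * (t + (|α| - 1)) ≤ N * t := by
    have h3 : |v| * |(1 - α) - t| = r * |I| := by
      rw [← abs_mul, heq, abs_mul, abs_of_pos hr0]
    have h4 : r * |I| ≤ N * t := by
      have := mul_le_mul_of_nonneg_left hI hr0.le
      nlinarith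
    have h5 : |v| * (t + (|α| - 1)) ≤ |v| * |(1 - α) - t| :=
      mul_le_mul_of_nonneg_left hden (abs_nonneg v)
    linarith
  have hαpos : (0:ℝ) < |α| := by linarith
  rw [le_div_iff₀ hαpos]
  rcases le_or_gt (|v|) N with hvN | hvN
  · nlinarith [mul_le_mul_of_nonneg_left ht1 (sub_nonneg.mpr hvN)]
  · exfalso
    have h6 : N * t ≤ |v| * t := mul_le_mul_of_nonneg_right hvN.le ht0
    nlinarith [mul_pos (hN.trans_lt hvN) (by linarith : (0:ℝ) < |α| - 1)]

theorem eigen_system_trivial_of_abs_gt_one (d : ℕ)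
    (P Q : Measure (EuclideanSpace ℝ (Fin d)))
    [IsProbabilityMeasure P] [IsProbabilityMeasure Q]
    (E : Set (EuclideanSpace ℝ (Fin d) × EuclideanSpace ℝ (Fin d)))
    (hE : MeasurableSet E)
    (f g : EuclideanSpace ℝ (Fin d) → ℝ)
    (hf2 : MemLp f 2 P) (hg2 : MemLp g 2 Q)
    (hfb : MemLp f ⊤ P) (hgb : MemLp g ⊤ Q)
    (η ε α : ℝ) (hη : 0 < η) (hηε : η ≤ ε) (hε : 0 < ε) (hα : 1 < |α|)
    (h1 : ∀ᵐ x ∂P, f x * ((1 - α) - (η/ε) * (Q {y | (x, y) ∈ E}).toReal) =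
      (η/ε) * ∫ y in {y | (x, y) ∈ E}, g y ∂Q)
    (h2 : ∀ᵐ y ∂Q, g y * ((1 - α) - (η/ε) * (P {x | (x, y) ∈ E}).toReal) =
      (η/ε) * ∫ x in {x | (x, y) ∈ E}, f x ∂P) :
    (∀ᵐ x ∂P, f x = 0) ∧ (∀ᵐ y ∂Q, g y = 0) := by
  set r : ℝ := η / ε with hr
  have hr0 : 0 < r := div_pos hη hε
  have hr1 : r ≤ 1 := (div_le_one hε).mpr hηε
  have hαpos : (0:ℝ) < |α| := by linarith
  -- essential sup bounds
  have hMfin : eLpNormEssSup f P < ⊤ := by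
    have := hfb.2; rwa [eLpNorm_exponent_top] at this
  have hNfin : eLpNormEssSup g Q < ⊤ := by
    have := hgb.2; rwa [eLpNorm_exponent_top] at this
  set M : ℝ := (eLpNormEssSup f P).toReal with hM
  set N : ℝ := (eLpNormEssSup g Q).toReal with hN
  have hM0 : 0 ≤ M := ENNReal.toReal_nonneg
  have hN0 : 0 ≤ N := ENNReal.toReal_nonneg
  have hfle : ∀ᵐ x ∂P, |f x| ≤ M := by
    filter_upwards [ae_le_eLpNormEssSup (f := f) (μ := P)] with x hx
    have : (‖f x‖₊ : ℝ≥0∞) ≤ eLpNormEssSup f P := hx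
    have h2 := ENNReal.toReal_le_toReal (by simp) hMfin.ne |>.mpr this
    simpa using h2
  have hgle : ∀ᵐ y ∂Q, |g y| ≤ N := by
    filter_upwards [ae_le_eLpNormEssSup (f := g) (μ := Q)] with y hy
    have : (‖g y‖₊ : ℝ≥0∞) ≤ eLpNormEssSup g Q := hy
    have h2 := ENNReal.toReal_le_toReal (by simp) hNfin.ne |>.mpr this
    simpa using h2
  -- step 1 : a.e. |f x| ≤ N / |α|
  have step1 : ∀ᵐ x ∂P, |f x| ≤ N / |α| := by
    filter_upwards [h1] with x hx
    set S := {y | (x, y) ∈ E} with hS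
    set q : ℝ := (Q S).toReal with hq
    have hq0 : 0 ≤ q := ENNReal.toReal_nonneg
    have hq1 : q ≤ 1 := by
      rw [hq]
      exact ENNReal.toReal_le_of_le_ofReal one_pos.le (by simpa using prob_le_one)
    have hI : |∫ y in S, g y ∂Q| ≤ N * q := by
      have := norm_setIntegral_le_of_norm_le_const_ae (μ := Q) (s := S) (C := N) (f := g)
        (measure_lt_top Q S) (ae_restrict_of_ae (hgle.mono fun y hy => by
          simpa using hy))
      simpa [hq, mul_comm, measureReal_def] using this
    exact eigen_pointwise_bound (f x) r α N q _ hr0 hr1 hα hN0 hq0 hq1 hI hx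
  have step2 : ∀ᵐ y ∂Q, |g y| ≤ M / |α| := by
    filter_upwards [h2] with y hy
    set T := {x | (x, y) ∈ E} with hT
    set q : ℝ := (P T).toReal with hq
    have hq0 : 0 ≤ q := ENNReal.toReal_nonneg
    have hq1 : q ≤ 1 := by
      rw [hq]
      exact ENNReal.toReal_le_of_le_ofReal one_pos.le (by simpa using prob_le_one)
    have hI : |∫ x in T, f x ∂P| ≤ M * q := by
      have := norm_setIntegral_le_of_norm_le_const_ae (μ := P) (s := T) (C := M) (f := f)
        (measure_lt_top P T) (ae_restrict_of_ae (hfle.mono fun x hx => by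
          simpa using hx))
      simpa [hq, mul_comm, measureReal_def] using this
    exact eigen_pointwise_bound (g y) r α M q _ hr0 hr1 hα hM0 hq0 hq1 hI hy
  -- turn into essSup inequalities
  have hMN : M ≤ N / |α| := by
    have h := eLpNormEssSup_le_of_ae_bound (μ := P) (f := f)
      (step1.mono fun x hx => by simpa using hx)
    have := ENNReal.toReal_le_toReal hMfin.ne ENNReal.ofReal_ne_top |>.mpr h
    rwa [ENNReal.toReal_ofReal (by positivity)] at this
  have hNM : N ≤ M / |α| := by
    have h := eLpNormEssSup_le_of_ae_bound (μ := Q) (f := g)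
      (step2.mono fun y hy => by simpa using hy)
    have := ENNReal.toReal_le_toReal hNfin.ne ENNReal.ofReal_ne_top |>.mpr h
    rwa [ENNReal.toReal_ofReal (by positivity)] at this
  have hMzero : M = 0 := by
    have h1' : M * |α| ≤ N := (le_div_iff₀ hαpos).mp hMN
    have h2' : N * |α| ≤ M := (le_div_iff₀ hαpos).mp hNM
    nlinarith
  have hNzero : N = 0 := by
    have h2' : N * |α| ≤ M := (le_div_iff₀ hαpos).mp hNM
    nlinarith
  constructor
  · filter_upwards [hfle] with x hx
    have : |f x| ≤ 0 := by rw [hMzero] at hx; exact hx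
    exact abs_nonpos_iff.mp this
  · filter_upwards [hgle] with y hy
    have : |g y| ≤ 0 := by rw [hNzero] at hy; exact hy
    exact abs_nonpos_iff.mp this
end

section
/- Let P, Q be probability measures on ℝ^d, E ⊆ ℝ^d × ℝ^d measurable with sections S_x and T_y, and η, ε > 0 with either η < ε, or η = ε and (P ⊗ Q)(E) < 1. Suppose f ∈ L²(P), g ∈ L²(Q) satisfy 2f(x) = (η/ε) ∫_{S_x} (f(x) + g(y)) dQ(y) for P-a.e. x and 2g(y) = (η/ε) ∫_{T_y} (f(x) + g(y)) dP(x) for Q-a.e. y. Then f(x) + g(y) = 0 for (P ⊗ Q)-a.e. (x,y). -/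
open MeasureTheory

theorem my_cs {α : Type*} {m : MeasurableSpace α} {ν : Measure α} [IsFiniteMeasure ν]
    (hν : ν Set.univ ≤ 1) {u : α → ℝ} (hu : MemLp u 2 ν) :
    (∫ y, u y ∂ν)^2 ≤ ∫ y, (u y)^2 ∂ν := by
  have hconj : Real.HolderConjugate 2 2 := Real.holderConjugate_iff.mpr ⟨one_lt_two, by norm_num⟩
  have h1 : MemLp (fun _ : α => (1:ℝ)) (ENNReal.ofReal 2) ν := memLp_const 1
  have hu' : MemLp u (ENNReal.ofReal 2) ν := by
    convert hu using 2; norm_num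
  have key := integral_mul_norm_le_Lp_mul_Lq hconj h1 hu'
  simp only [norm_one, one_mul, Real.one_rpow, integral_const, smul_eq_mul, mul_one,
    Real.norm_eq_abs] at key
  have habs : ∀ a : α, |u a| ^ (2:ℝ) = (u a)^2 := by
    intro a
    rw [show ((2:ℝ)) = ((2:ℕ):ℝ) by norm_num, Real.rpow_natCast, sq_abs]
  simp only [habs] at key
  have h0 : (0:ℝ) ≤ ∫ y, (u y)^2 ∂ν := integral_nonneg fun y => sq_nonneg _
  have hT : (ν Set.univ).toReal ≤ 1 := by
    have := ENNReal.toReal_mono (by norm_num) hν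
    simpa using this
  have hT0 : (0:ℝ) ≤ (ν Set.univ).toReal := ENNReal.toReal_nonneg
  have hint : |∫ y, u y ∂ν| ≤ ∫ y, |u y| ∂ν := by
    simpa using norm_integral_le_integral_norm (μ := ν) u
  have hsq : (∫ y, u y ∂ν)^2 = |∫ y, u y ∂ν|^2 := (sq_abs _).symm
  rw [hsq]
  have h2 : |∫ y, u y ∂ν|^2 ≤ (∫ y, |u y| ∂ν)^2 :=
    pow_le_pow_left₀ (abs_nonneg _) hint 2
  refine h2.trans ?_
  have h3 : (∫ y, |u y| ∂ν)^2
      ≤ ((ν Set.univ).toReal ^ ((1:ℝ)/2) * (∫ y, (u y)^2 ∂ν) ^ ((1:ℝ)/2))^2 :=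
    pow_le_pow_left₀ (integral_nonneg fun y => abs_nonneg _) key 2
  refine h3.trans ?_
  rw [mul_pow, ← Real.rpow_natCast ((ν Set.univ).toReal ^ ((1:ℝ)/2)) 2,
      ← Real.rpow_natCast ((∫ y, (u y)^2 ∂ν) ^ ((1:ℝ)/2)) 2,
      ← Real.rpow_mul hT0, ← Real.rpow_mul h0]
  norm_num
  calc (ν Set.univ).toReal * ∫ y, (u y)^2 ∂ν ≤ 1 * ∫ y, (u y)^2 ∂ν :=
        mul_le_mul_of_nonneg_right hT h0
    _ = _ := one_mul _

theorem eigen_system_trivial_neg_one (d : ℕ)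
    (P Q : Measure (EuclideanSpace ℝ (Fin d)))
    [IsProbabilityMeasure P] [IsProbabilityMeasure Q]
    (E : Set (EuclideanSpace ℝ (Fin d) × EuclideanSpace ℝ (Fin d)))
    (hE : MeasurableSet E)
    (f g : EuclideanSpace ℝ (Fin d) → ℝ)
    (hf2 : MemLp f 2 P) (hg2 : MemLp g 2 Q)
    (hmf : Measurable f) (hmg : Measurable g)
    (η ε : ℝ) (hη : 0 < η) (hε : 0 < ε)
    (hcase : η < ε ∨ (η = ε ∧ (P.prod Q) E < 1))
    (h1 : ∀ᵐ x ∂P, 2 * f x = (η/ε) * ∫ y in {y | (x, y) ∈ E}, (f x + g y) ∂Q)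
    (h2 : ∀ᵐ y ∂Q, 2 * g y = (η/ε) * ∫ x in {x | (x, y) ∈ E}, (f x + g y) ∂P) :
    ∀ᵐ p ∂(P.prod Q), f p.1 + g p.2 = 0 := by
  set r : ℝ := η / ε with hrdef
  have hr0 : 0 < r := div_pos hη hε
  have hr1 : r ≤ 1 := by
    rcases hcase with h | ⟨h, _⟩
    · exact le_of_lt (div_lt_one hε |>.mpr h)
    · rw [hrdef, h, div_self hε.ne']
  -- measurable sections
  have hSx : ∀ x : EuclideanSpace ℝ (Fin d), MeasurableSet {y | (x, y) ∈ E} := fun x =>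
    measurable_prodMk_left hE
  have hTy : ∀ y : EuclideanSpace ℝ (Fin d), MeasurableSet {x | (x, y) ∈ E} := fun y =>
    measurable_prodMk_right hE
  -- measure preserving projections
  have hmpf : MeasurePreserving (Prod.fst : EuclideanSpace ℝ (Fin d) × EuclideanSpace ℝ (Fin d) → EuclideanSpace ℝ (Fin d)) (P.prod Q) P :=
    ⟨measurable_fst, by simp⟩
  have hmps : MeasurePreserving (Prod.snd : EuclideanSpace ℝ (Fin d) × EuclideanSpace ℝ (Fin d) → EuclideanSpace ℝ (Fin d)) (P.prod Q) Q :=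
    ⟨measurable_snd, by simp⟩
  -- MemLp facts
  have hF : MemLp (fun p : EuclideanSpace ℝ (Fin d) × EuclideanSpace ℝ (Fin d) => f p.1) 2 (P.prod Q) :=
    by exact hf2.comp_measurePreserving hmpf
  have hG : MemLp (fun p : EuclideanSpace ℝ (Fin d) × EuclideanSpace ℝ (Fin d) => g p.2) 2 (P.prod Q) :=
    by exact hg2.comp_measurePreserving hmps
  have hH : MemLp (fun p : EuclideanSpace ℝ (Fin d) × EuclideanSpace ℝ (Fin d) => f p.1 + g p.2) 2 (P.prod Q) := hF.add hG
  have hH2 : Integrable (fun p : EuclideanSpace ℝ (Fin d) × EuclideanSpace ℝ (Fin d) => (f p.1 + g p.2)^2) (P.prod Q) := hH.integrable_sq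
  set k : EuclideanSpace ℝ (Fin d) × EuclideanSpace ℝ (Fin d) → ℝ := E.indicator (fun p => (f p.1 + g p.2)^2) with hkdef
  have hkint : Integrable k (P.prod Q) := hH2.indicator hE
  set I : ℝ := ∫ p, (f p.1 + g p.2)^2 ∂(P.prod Q) with hIdef
  set J : ℝ := ∫ p, k p ∂(P.prod Q) with hJdef
  have hI0 : 0 ≤ I := integral_nonneg fun p => sq_nonneg _
  have hkle : ∀ p, k p ≤ (f p.1 + g p.2)^2 := fun p =>
    Set.indicator_le_self' (fun q _ => sq_nonneg _) p
  have hk0 : ∀ p, 0 ≤ k p := fun p =>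
    Set.indicator_nonneg (fun q _ => sq_nonneg _) p
  have hJI : J ≤ I := integral_mono hkint hH2 hkle
  -- marginals of k
  set C : EuclideanSpace ℝ (Fin d) → ℝ := fun x => ∫ y, k (x, y) ∂Q with hCdef
  set D : EuclideanSpace ℝ (Fin d) → ℝ := fun y => ∫ x, k (x, y) ∂P with hDdef
  have hCint : Integrable C P := hkint.integral_prod_left
  have hDint : Integrable D Q := hkint.integral_prod_right
  have hCJ : ∫ x, C x ∂P = J := (integral_prod k hkint).symm
  have hDJ : ∫ y, D y ∂Q = J := (integral_prod_symm k hkint).symm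
  have hCx : ∀ x : EuclideanSpace ℝ (Fin d), C x = ∫ y in {y | (x, y) ∈ E}, (f x + g y)^2 ∂Q := by
    intro x
    rw [hCdef]
    rw [← integral_indicator (hSx x)]
    rfl
  have hDy : ∀ y : EuclideanSpace ℝ (Fin d), D y = ∫ x in {x | (x, y) ∈ E}, (f x + g y)^2 ∂P := by
    intro y
    rw [hDdef]
    rw [← integral_indicator (hTy y)]
    rfl
  -- a.e. pointwise bounds from the eigen-equations and Cauchy-Schwarz
  have hfae : ∀ᵐ x ∂P, 4 * (f x)^2 ≤ r^2 * C x := by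
    filter_upwards [h1] with x hx
    have hu : MemLp (fun y => f x + g y) 2 Q := (memLp_const (f x)).add hg2
    have hQle : (Q.restrict {y | (x, y) ∈ E}) Set.univ ≤ 1 := by
      rw [Measure.restrict_apply_univ]
      exact prob_le_one
    have hcs := my_cs hQle (hu.restrict _)
    rw [hCx x]
    have : (2 * f x)^2 = r^2 * (∫ y in {y | (x, y) ∈ E}, (f x + g y) ∂Q)^2 := by
      rw [hx]; ring
    nlinarith [sq_nonneg r, mul_le_mul_of_nonneg_left hcs (sq_nonneg r)]
  have hgae : ∀ᵐ y ∂Q, 4 * (g y)^2 ≤ r^2 * D y := by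
    filter_upwards [h2] with y hy
    have hu : MemLp (fun x => f x + g y) 2 P := hf2.add (memLp_const (g y))
    have hPle : (P.restrict {x | (x, y) ∈ E}) Set.univ ≤ 1 := by
      rw [Measure.restrict_apply_univ]
      exact prob_le_one
    have hcs := my_cs hPle (hu.restrict _)
    rw [hDy y]
    have : (2 * g y)^2 = r^2 * (∫ x in {x | (x, y) ∈ E}, (f x + g y) ∂P)^2 := by
      rw [hy]; ring
    nlinarith [sq_nonneg r, mul_le_mul_of_nonneg_left hcs (sq_nonneg r)]
  -- lift to the product
  have hfae' : ∀ᵐ p ∂(P.prod Q), 4 * (f p.1)^2 ≤ r^2 * C p.1 :=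
    Measure.quasiMeasurePreserving_fst.ae hfae
  have hgae' : ∀ᵐ p ∂(P.prod Q), 4 * (g p.2)^2 ≤ r^2 * D p.2 :=
    Measure.quasiMeasurePreserving_snd.ae hgae
  have hptwise : ∀ᵐ p ∂(P.prod Q),
      (f p.1 + g p.2)^2 ≤ r^2/2 * (C p.1 + D p.2) := by
    filter_upwards [hfae', hgae'] with p hp1 hp2
    nlinarith [sq_nonneg (f p.1 - g p.2)]
  -- integrate the pointwise bound
  have hCcomp : Integrable (fun p : EuclideanSpace ℝ (Fin d) × EuclideanSpace ℝ (Fin d) => C p.1) (P.prod Q) :=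
    (hmpf.integrable_comp hCint.1).mpr hCint
  have hDcomp : Integrable (fun p : EuclideanSpace ℝ (Fin d) × EuclideanSpace ℝ (Fin d) => D p.2) (P.prod Q) :=
    (hmps.integrable_comp hDint.1).mpr hDint
  have hCci : ∫ p, C p.1 ∂(P.prod Q) = J := by
    have h := integral_map (φ := (Prod.fst : EuclideanSpace ℝ (Fin d) × EuclideanSpace ℝ (Fin d) → EuclideanSpace ℝ (Fin d)))
      (μ := P.prod Q) measurable_fst.aemeasurable (f := C)
      (by rw [hmpf.map_eq]; exact hCint.1)
    rw [hmpf.map_eq] at h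
    rw [← h, hCJ]
  have hDci : ∫ p, D p.2 ∂(P.prod Q) = J := by
    have h := integral_map (φ := (Prod.snd : EuclideanSpace ℝ (Fin d) × EuclideanSpace ℝ (Fin d) → EuclideanSpace ℝ (Fin d)))
      (μ := P.prod Q) measurable_snd.aemeasurable (f := D)
      (by rw [hmps.map_eq]; exact hDint.1)
    rw [hmps.map_eq] at h
    rw [← h, hDJ]
  have hIJ : I ≤ r^2 * J := by
    have hb : Integrable (fun p : EuclideanSpace ℝ (Fin d) × EuclideanSpace ℝ (Fin d) => r^2/2 * (C p.1 + D p.2)) (P.prod Q) :=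
      ((hCcomp.add hDcomp).const_mul _)
    have := integral_mono_ae hH2 hb hptwise
    rw [hIdef]
    refine this.trans_eq ?_
    rw [integral_const_mul, integral_add hCcomp hDcomp, hCci, hDci]
    ring
  -- final common step : I = 0 implies the conclusion
  have final : I = 0 → ∀ᵐ p ∂(P.prod Q), f p.1 + g p.2 = 0 := by
    intro hIz
    have h0 : (fun p : EuclideanSpace ℝ (Fin d) × EuclideanSpace ℝ (Fin d) => (f p.1 + g p.2)^2) =ᵐ[P.prod Q] 0 := by
      rw [← integral_eq_zero_iff_of_nonneg (fun p => sq_nonneg _) hH2]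
      exact hIz
    filter_upwards [h0] with p hp
    have : (f p.1 + g p.2)^2 = 0 := hp
    exact (pow_eq_zero_iff two_ne_zero).mp this
  rcases hcase with hlt | ⟨heq, hElt⟩
  · -- case η < ε : r < 1
    have hrlt : r < 1 := (div_lt_one hε).mpr hlt
    apply final
    have h3 : I ≤ r^2 * I := le_trans hIJ (mul_le_mul_of_nonneg_left hJI (sq_nonneg r))
    have hr2 : r^2 < 1 := by nlinarith
    have hneg : I ≤ 0 := by nlinarith
    linarith
  · -- case η = ε, μ(E) < 1
    have hr : r = 1 := by rw [hrdef, heq, div_self hε.ne']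
    have hIJ' : I = J := le_antisymm (by rw [hr] at hIJ; simpa using hIJ) hJI
    have hdiff : (fun p : EuclideanSpace ℝ (Fin d) × EuclideanSpace ℝ (Fin d) =>
        (f p.1 + g p.2)^2 - k p) =ᵐ[P.prod Q] 0 := by
      rw [← integral_eq_zero_iff_of_nonneg (fun p => sub_nonneg.mpr (hkle p)) (hH2.sub hkint)]
      rw [integral_sub hH2 hkint, ← hIdef, ← hJdef]
      linarith
    have hEor : ∀ᵐ p ∂(P.prod Q), p ∈ E ∨ f p.1 + g p.2 = 0 := by
      filter_upwards [hdiff] with p hp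
      by_cases hpE : p ∈ E
      · exact Or.inl hpE
      · right
        have hkz : k p = 0 := by rw [hkdef]; simp [Set.indicator_of_notMem hpE]
        have hp' : (f p.1 + g p.2)^2 - k p = 0 := hp
        have hsq : (f p.1 + g p.2)^2 = 0 := by rw [hkz] at hp'; linarith
        exact (pow_eq_zero_iff two_ne_zero).mp hsq
    have hae2 : ∀ᵐ x ∂P, ∀ᵐ y ∂Q, ((x, y) ∈ E ∨ f x + g y = 0) :=
      Measure.ae_ae_of_ae_prod hEor
    have hEor2 : ∀ᵐ p ∂(Q.prod P), (p.2, p.1) ∈ E ∨ f p.2 + g p.1 = 0 :=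
      (Measure.measurePreserving_swap (μ := Q) (ν := P)).quasiMeasurePreserving.ae hEor
    have hae2' : ∀ᵐ y ∂Q, ∀ᵐ x ∂P, ((x, y) ∈ E ∨ f x + g y = 0) :=
      Measure.ae_ae_of_ae_prod hEor2
    set mf : ℝ := ∫ x, f x ∂P with hmfdef
    set mg : ℝ := ∫ y, g y ∂Q with hmgdef
    have hgint : Integrable g Q := hg2.integrable one_le_two
    have hfint : Integrable f P := hf2.integrable one_le_two
    -- f is a.e. constant equal to mg
    have hfc : ∀ᵐ x ∂P, f x = mg := by
      filter_upwards [h1, Measure.ae_ae_of_ae_prod hEor] with x hx hxae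
      have hu_int : Integrable (fun y => f x + g y) Q := (integrable_const _).add hgint
      have hsplit := integral_add_compl (hSx x) hu_int
      have hz : ∫ y in {y | (x, y) ∈ E}ᶜ, (f x + g y) ∂Q = 0 := by
        have hcong : (fun y => f x + g y) =ᵐ[Q.restrict {y | (x, y) ∈ E}ᶜ] 0 := by
          filter_upwards [ae_restrict_mem (hSx x).compl, ae_restrict_of_ae hxae] with y hy hyo
          rcases hyo with h | h
          · exact absurd h hy
          · exact h
        rw [integral_congr_ae hcong]
        simp
      have hfull : ∫ y, (f x + g y) ∂Q = f x + mg := by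
        rw [integral_add (integrable_const _) hgint, integral_const]
        simp [hmgdef]
      have hset : ∫ y in {y | (x, y) ∈ E}, (f x + g y) ∂Q = f x + mg := by
        rw [hz, add_zero, hfull] at hsplit
        exact hsplit
      rw [hr, one_mul, hset] at hx
      linarith
    -- g is a.e. constant equal to mf
    have hgc : ∀ᵐ y ∂Q, g y = mf := by
      filter_upwards [h2, hae2'] with y hy hyae
      have hu_int : Integrable (fun x => f x + g y) P := hfint.add (integrable_const _)
      have hsplit := integral_add_compl (hTy y) hu_int
      have hz : ∫ x in {x | (x, y) ∈ E}ᶜ, (f x + g y) ∂P = 0 := by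
        have hcong : (fun x => f x + g y) =ᵐ[P.restrict {x | (x, y) ∈ E}ᶜ] 0 := by
          filter_upwards [ae_restrict_mem (hTy y).compl, ae_restrict_of_ae hyae] with x hxm hxo
          rcases hxo with h | h
          · exact absurd h hxm
          · exact h
        rw [integral_congr_ae hcong]
        simp
      have hfull : ∫ x, (f x + g y) ∂P = mf + g y := by
        rw [integral_add hfint (integrable_const _), integral_const]
        simp [hmfdef]
      have hset : ∫ x in {x | (x, y) ∈ E}, (f x + g y) ∂P = mf + g y := by
        rw [hz, add_zero, hfull] at hsplit
        exact hsplit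
      rw [hr, one_mul, hset] at hy
      linarith
    have hmm : mf = mg := by
      have h := integral_congr_ae hfc
      rw [integral_const] at h
      simpa [hmfdef] using h
    by_cases hc : mg = 0
    · -- everything vanishes
      have hfc0 : ∀ᵐ x ∂P, f x = 0 := by
        filter_upwards [hfc] with x hx; rw [hx, hc]
      have hgc0 : ∀ᵐ y ∂Q, g y = 0 := by
        filter_upwards [hgc] with y hy; rw [hy, hmm, hc]
      have hf0 : ∀ᵐ p ∂(P.prod Q), f p.1 = 0 :=
        Measure.quasiMeasurePreserving_fst.ae hfc0
      have hg0 : ∀ᵐ p ∂(P.prod Q), g p.2 = 0 :=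
        Measure.quasiMeasurePreserving_snd.ae hgc0
      filter_upwards [hf0, hg0] with p hp1 hp2
      rw [hp1, hp2, add_zero]
    · exfalso
      -- Q-sections of E have full measure a.e., contradicting μ(E) < 1
      have hQ1 : ∀ᵐ x ∂P, Q {y | (x, y) ∈ E} = 1 := by
        filter_upwards [h1, hfc] with x hx hfx
        have hcong : (fun y => f x + g y) =ᵐ[Q.restrict {y | (x, y) ∈ E}] (fun _ => mg + mg) := by
          filter_upwards [ae_restrict_of_ae hgc] with y hy
          rw [hfx, hy, hmm]
        have hset : ∫ y in {y | (x, y) ∈ E}, (f x + g y) ∂Q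
            = (Q {y | (x, y) ∈ E}).toReal * (mg + mg) := by
          rw [integral_congr_ae hcong, setIntegral_const, smul_eq_mul, measureReal_def]
        rw [hr, one_mul, hset, hfx] at hx
        have htr : (Q {y | (x, y) ∈ E}).toReal = 1 := by
          have h2mg : (2:ℝ) * mg ≠ 0 := mul_ne_zero two_ne_zero hc
          have hmc : (Q {y | (x, y) ∈ E}).toReal * (2 * mg) = 1 * (2 * mg) := by linarith
          exact mul_right_cancel₀ h2mg hmc
        have hne : Q {y | (x, y) ∈ E} ≠ ⊤ := measure_ne_top _ _
        rw [← ENNReal.toReal_one] at htr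
        exact (ENNReal.toReal_eq_toReal_iff' hne ENNReal.one_ne_top).mp htr
      have hQ1' : ∀ᵐ x ∂P, Q (Prod.mk x ⁻¹' E) = 1 := hQ1
      have hE1 : (P.prod Q) E = 1 := by
        rw [Measure.prod_apply hE, lintegral_congr_ae hQ1', lintegral_one, measure_univ]
      exact absurd hE1 (ne_of_lt hElt)
end

section
/- Let P, Q be probability measures on ℝ^d and f, g : ℝ^d → ℝ bounded measurable. For all x, x' ∈ ℝ^d and η ∈ (0, ε], defining the gradient descent update f⁺(x) = f(x) + η(1 - (1/ε) ∫ (f(x) + g(y) - ½‖x-y‖²)₊ dQ(y)), one has f⁺(x) - f⁺(x') ≤ max(L, C) ‖x - x'‖ whenever f is L-Lipschitz, where C := sup{‖x - y‖ : x ∈ spt P ∪ {x, x'}, y ∈ spt Q} bounds the relevant distances; i.e., Lipschitz constants do not grow beyond max(L, C) under the gradient descent step. -/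
open MeasureTheory

theorem gradient_step_lipschitz_bound (d : ℕ)
    (Q : Measure (EuclideanSpace ℝ (Fin d))) [IsProbabilityMeasure Q]
    (Ω' : Set (EuclideanSpace ℝ (Fin d))) (hQsupp : Q Ω'ᶜ = 0)
    (f g : EuclideanSpace ℝ (Fin d) → ℝ)
    (ε η L C : ℝ) (hε : 0 < ε) (hη : η ∈ Set.Ioc (0:ℝ) ε) (hL : 0 ≤ L)
    (hLip : ∀ a b, |f a - f b| ≤ L * ‖a - b‖)
    (x x' : EuclideanSpace ℝ (Fin d))
    (hC : ∀ y ∈ Ω', ‖x - y‖ ≤ C ∧ ‖x' - y‖ ≤ C)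
    (hInt : ∀ z, Integrable (fun y => max (f z + g y - (1/2) * ‖z - y‖^2) 0) Q)
    (fplus : EuclideanSpace ℝ (Fin d) → ℝ)
    (hfplus : ∀ z, fplus z =
      f z + η * (1 - (1/ε) * ∫ y, max (f z + g y - (1/2) * ‖z - y‖^2) 0 ∂Q)) :
    fplus x - fplus x' ≤ max L C * ‖x - x'‖ := by
  set δ := ‖x - x'‖ with hδ
  have hδ0 : 0 ≤ δ := norm_nonneg _
  set a := f x - f x' with ha
  have haL : a ≤ L * δ := le_of_abs_le (hLip x x')
  have haL' : -(L * δ) ≤ a := neg_le_of_abs_le (hLip x x')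
  set m := max (C * δ - a) 0 with hm
  -- a.e. pointwise bound
  have hae : ∀ᵐ y ∂Q, max (f x' + g y - (1/2) * ‖x' - y‖^2) 0
      ≤ max (f x + g y - (1/2) * ‖x - y‖^2) 0 + m := by
    have hΩ : ∀ᵐ y ∂Q, y ∈ Ω' := by
      rw [MeasureTheory.ae_iff]
      exact hQsupp
    filter_upwards [hΩ] with y hy
    obtain ⟨h1, h2⟩ := hC y hy
    have hnn1 : (0:ℝ) ≤ ‖x - y‖ := norm_nonneg _
    have hnn2 : (0:ℝ) ≤ ‖x' - y‖ := norm_nonneg _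
    have hdiff : |‖x - y‖ - ‖x' - y‖| ≤ δ := by
      have := abs_norm_sub_norm_le (x - y) (x' - y)
      simpa [hδ, sub_sub_sub_cancel_right] using this
    have hst : (f x' + g y - (1/2) * ‖x' - y‖^2) - (f x + g y - (1/2) * ‖x - y‖^2)
        ≤ C * δ - a := by
      have habs := abs_le.mp hdiff
      nlinarith [habs.1, habs.2]
    have key : max (f x' + g y - (1/2) * ‖x' - y‖^2) 0
        - max (f x + g y - (1/2) * ‖x - y‖^2) 0
        ≤ max ((f x' + g y - (1/2) * ‖x' - y‖^2) - (f x + g y - (1/2) * ‖x - y‖^2)) 0 := by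
      rcases le_total (f x' + g y - (1/2) * ‖x' - y‖^2) 0 with h | h
      · have := le_max_right ((f x' + g y - (1/2) * ‖x' - y‖^2) - (f x + g y - (1/2) * ‖x - y‖^2)) (0:ℝ)
        have h0 : max (f x' + g y - (1/2) * ‖x' - y‖^2) 0 = 0 := max_eq_right h
        have h1' : (0:ℝ) ≤ max (f x + g y - (1/2) * ‖x - y‖^2) 0 := le_max_right _ _
        linarith
      · have h0 : max (f x' + g y - (1/2) * ‖x' - y‖^2) 0 = _ := max_eq_left h
        have h1' : f x + g y - (1/2) * ‖x - y‖^2 ≤ max (f x + g y - (1/2) * ‖x - y‖^2) 0 :=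
          le_max_left _ _
        have := le_max_left ((f x' + g y - (1/2) * ‖x' - y‖^2) - (f x + g y - (1/2) * ‖x - y‖^2)) (0:ℝ)
        linarith
    have hmax : max ((f x' + g y - (1/2) * ‖x' - y‖^2) - (f x + g y - (1/2) * ‖x - y‖^2)) 0
        ≤ m := max_le_max hst le_rfl
    linarith
  -- integral bound
  have hIint : ∫ y, max (f x' + g y - (1/2) * ‖x' - y‖^2) 0 ∂Q
      ≤ (∫ y, max (f x + g y - (1/2) * ‖x - y‖^2) 0 ∂Q) + m := by
    have h := integral_mono_ae (hInt x') ((hInt x).add (integrable_const m)) hae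
    have hadd : ∫ y, (max (f x + g y - (1/2) * ‖x - y‖^2) 0 + m) ∂Q
        = (∫ y, max (f x + g y - (1/2) * ‖x - y‖^2) 0 ∂Q) + m := by
      rw [integral_add (hInt x) (integrable_const m), integral_const]
      simp
    simp only [Pi.add_apply] at h
    rwa [hadd] at h
  have hx := hfplus x
  have hx' := hfplus x'
  set Ix := ∫ y, max (f x + g y - (1/2) * ‖x - y‖^2) 0 ∂Q with hIx
  set Ix' := ∫ y, max (f x' + g y - (1/2) * ‖x' - y‖^2) 0 ∂Q with hIx'
  have hformula : fplus x - fplus x' = a + (η/ε) * (Ix' - Ix) := by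
    rw [hx, hx', ha]
    field_simp
    ring
  rw [hformula]
  have hlam1 : η / ε ≤ 1 := (div_le_one hε).mpr hη.2
  have hlam0 : 0 < η / ε := div_pos hη.1 hε
  have hI : Ix' - Ix ≤ m := by linarith
  have hLM : L ≤ max L C := le_max_left _ _
  have hCM : C ≤ max L C := le_max_right _ _
  rcases max_cases (C * δ - a) 0 with ⟨hmeq, hge⟩ | ⟨hmeq, hlt⟩
  · have hthis : (η/ε) * (Ix' - Ix) ≤ (η/ε) * (C * δ - a) := by
      have := mul_le_mul_of_nonneg_left hI (le_of_lt hlam0)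
      rw [hm, hmeq] at this
      exact this
    have e1 : a * (1 - η/ε) ≤ (L * δ) * (1 - η/ε) :=
      mul_le_mul_of_nonneg_right haL (by linarith)
    have e2 : (L * δ) * (1 - η/ε) ≤ ((max L C) * δ) * (1 - η/ε) :=
      mul_le_mul_of_nonneg_right (mul_le_mul_of_nonneg_right hLM hδ0) (by linarith)
    have e3 : (η/ε) * (C * δ) ≤ (η/ε) * ((max L C) * δ) :=
      mul_le_mul_of_nonneg_left (mul_le_mul_of_nonneg_right hCM hδ0) (le_of_lt hlam0)
    have e4 : a + (η/ε) * (C * δ - a) = a * (1 - η/ε) + (η/ε) * (C * δ) := by ring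
    linarith
  · have hthis : (η/ε) * (Ix' - Ix) ≤ 0 := by
      have := mul_le_mul_of_nonneg_left hI (le_of_lt hlam0)
      rw [hm, hmeq, mul_zero] at this
      exact this
    have e2 : L * δ ≤ (max L C) * δ := mul_le_mul_of_nonneg_right hLM hδ0
    linarith
end
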